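/- For N_r = 2 (n = 4), define G_{4,k}(u) = ∑_{i=0}^{k−1} [4!·C(k−1,i)·(−1)^i / ((4−k+i+1)·(4−k)!·(k−1)!)] · u^{4−k+i+1} and Q_ORS(u) = (1/3)·G_{4,2}(u) + (2/3)·G_{4,3}(u). Then lim_{u→0⁺} Q_ORS(u)/u² = 4. -/

import Mathlib

/-- `G n k u = ∑_{i=0}^{k−1} n!·C(k−1,i)·(−1)^i / ((n−k+i+1)(n−k)!(k−1)!) · u^{n−k+i+1}`,
the CDF of the `k`-th largest of `n` i.i.d. random variables expressed as a
polynomial in the common per-entry CDF value `u`. -/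
noncomputable def orderCDF (n k : ℕ) (u : ℝ) : ℝ :=
  ∑ i ∈ Finset.range k,
    ((n.factorial : ℝ) * (((k - 1).choose i : ℝ)) * (-1 : ℝ) ^ i
        / (((n : ℝ) - (k : ℝ) + (i : ℝ) + 1) * ((n - k).factorial : ℝ)
            * ((k - 1).factorial : ℝ)))
      * u ^ (n - k + i + 1)

/-- For `Nr = 2` (so `n = 4`), the two-user ORS outage bound
`Q_ORS(u) = (1/3)·G_{4,2}(u) + (2/3)·G_{4,3}(u)` satisfies
`lim_{u→0⁺} Q_ORS(u)/u² = 4`. -/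
theorem ORS_outage_bound_limit_two_relays :
    Filter.Tendsto
      (fun u : ℝ =>
        ((1 / 3 : ℝ) * orderCDF 4 2 u + (2 / 3 : ℝ) * orderCDF 4 3 u) / u ^ 2)
      (nhdsWithin 0 (Set.Ioi 0)) (nhds 4) := by
  have key : ∀ u ∈ Set.Ioi (0:ℝ),
      (4 : ℝ) - 4*u + u^2 =
      ((1 / 3 : ℝ) * orderCDF 4 2 u + (2 / 3 : ℝ) * orderCDF 4 3 u) / u ^ 2 := by
    intro u hu
    have hu0 : u ≠ 0 := ne_of_gt hu
    simp only [orderCDF, Finset.sum_range_succ, Finset.sum_range_zero]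
    norm_num [Nat.factorial]
    field_simp
    ring
  have h2 : Filter.Tendsto (fun u : ℝ => (4 : ℝ) - 4*u + u^2)
      (nhdsWithin 0 (Set.Ioi 0)) (nhds 4) := by
    have hc : Continuous (fun u : ℝ => (4 : ℝ) - 4*u + u^2) := by continuity
    have : Filter.Tendsto (fun u : ℝ => (4 : ℝ) - 4*u + u^2) (nhds 0) (nhds 4) := by
      simpa using hc.tendsto 0
    exact this.mono_left nhdsWithin_le_nhds
  exact h2.congr' (Filter.eventuallyEq_of_mem self_mem_nhdsWithin key)
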